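/- arXiv:2603.09734 — 2 statements merged into one kernel-verified Lean document; each statement's English description precedes it below -/
import Mathlib

section
/- The Rockafellar–Uryasev representation: for a real integrable random variable X with continuous CDF and φ ∈ (0,1), CVaR_φ[X] = VaR_φ[X] + (1−φ)⁻¹ · E[(X − VaR_φ[X])⁺], where CVaR_φ[X] := E[X | X ≥ VaR_φ[X]]. -/
open MeasureTheory ProbabilityTheory Filter Set Topology

/-- Rockafellar–Uryasev representation: for an integrable real random variable X
with continuous CDF F and φ ∈ (0,1),
`CVaR_φ[X] = E[X·𝟙{X ≥ VaR}]/(1−φ) = VaR + (1−φ)⁻¹ E[(X − VaR)⁺]`,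
where `VaR = sInf {x : F x ≥ φ}`. -/
theorem cvar_rockafellar_uryasev
    {Ω : Type*} [MeasurableSpace Ω] (P : Measure Ω) [IsProbabilityMeasure P]
    (X : Ω → ℝ) (hX : Measurable X) (hint : Integrable X P)
    (F : ℝ → ℝ) (hF : ∀ x, F x = (P {ω | X ω ≤ x}).toReal)
    (hcont : Continuous F)
    (φ : ℝ) (hφ : φ ∈ Set.Ioo (0 : ℝ) 1) :
    (∫ ω, X ω * ({ω' : Ω | sInf {x : ℝ | φ ≤ F x} ≤ X ω'}).indicator
        (fun _ => (1 : ℝ)) ω ∂P) / (1 - φ)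
      = sInf {x : ℝ | φ ≤ F x}
        + (1 - φ)⁻¹ * ∫ ω, max (X ω - sInf {x : ℝ | φ ≤ F x}) 0 ∂P := by
  obtain ⟨hφ0, hφ1⟩ := hφ
  set v := sInf {x : ℝ | φ ≤ F x} with hv
  set μ := P.map X with hμdef
  have hμprob : IsProbabilityMeasure μ := Measure.isProbabilityMeasure_map hX.aemeasurable
  have hFμ : ∀ x, F x = (μ (Iic x)).toReal := by
    intro x
    rw [hF, hμdef, Measure.map_apply hX measurableSet_Iic]
    rfl
  have hFcdf : F = cdf μ := by
    ext x; rw [hFμ, cdf_eq_real, measureReal_def]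
  -- the set S
  have hS_ne : {x : ℝ | φ ≤ F x}.Nonempty := by
    have h := hFcdf ▸ tendsto_cdf_atTop (μ := μ)
    exact (h.eventually_const_le hφ1).exists
  have hS_bdd : BddBelow {x : ℝ | φ ≤ F x} := by
    have h := hFcdf ▸ tendsto_cdf_atBot (μ := μ)
    have h2 : ∀ᶠ x in atBot, F x < φ := h.eventually_lt_const hφ0
    obtain ⟨x0, hx0⟩ := eventually_atBot.mp h2
    exact ⟨x0, fun y hy => by by_contra hlt; exact absurd hy (not_le.2 (hx0 y (le_of_not_ge hlt)))⟩
  have hS_closed : IsClosed {x : ℝ | φ ≤ F x} :=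
    isClosed_le continuous_const hcont
  have hvmem : v ∈ {x : ℝ | φ ≤ F x} := hS_closed.csInf_mem hS_ne hS_bdd
  have hFv_ge : φ ≤ F v := hvmem
  have hFv_le : F v ≤ φ := by
    have htend : Tendsto F (𝓝[<] v) (𝓝 (F v)) :=
      (hcont.tendsto v).mono_left nhdsWithin_le_nhds
    refine le_of_tendsto htend ?_
    filter_upwards [self_mem_nhdsWithin] with x hx
    by_contra h
    exact absurd (csInf_le hS_bdd (le_of_not_ge h : φ ≤ F x)) (not_le.2 hx)
  have hFv : F v = φ := le_antisymm hFv_le hFv_ge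
  -- μ (Iic v) = ofReal φ
  have hIic : μ (Iic v) = ENNReal.ofReal φ := by
    rw [← ofReal_cdf, ← hFcdf, hFv]
  -- μ {v} = 0
  have hsing : μ {v} = 0 := by
    have hll : Function.leftLim (cdf μ) v = cdf μ v :=
      leftLim_eq_of_tendsto (h := nhdsLT_neBot v) ((hFcdf ▸ hcont.tendsto v).mono_left nhdsWithin_le_nhds)
    have := (cdf μ).measure_singleton v
    rw [measure_cdf] at this
    rw [this, hll]
    simp
  have hIio : μ (Iio v) = ENNReal.ofReal φ := by
    have hsplit : (Iic v : Set ℝ) = Iio v ∪ {v} := by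
      ext x; simp [le_iff_lt_or_eq]
    have : μ (Iic v) = μ (Iio v) + μ {v} := by
      rw [hsplit, measure_union (by simp) (measurableSet_singleton v)]
    rw [hsing, add_zero] at this
    rw [← this, hIic]
  -- P of the event
  set A : Set Ω := {ω' : Ω | v ≤ X ω'} with hA
  have hAmeas : MeasurableSet A := hX measurableSet_Ici
  have hPA : P A = ENNReal.ofReal (1 - φ) := by
    have : A = X ⁻¹' (Ici v) := rfl
    rw [this, ← Measure.map_apply hX measurableSet_Ici, ← hμdef]
    have hcompl : (Ici v : Set ℝ) = (Iio v)ᶜ := by simp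
    rw [hcompl, measure_compl measurableSet_Iio (measure_ne_top _ _), hIio]
    rw [measure_univ]
    rw [ENNReal.ofReal_sub _ (le_of_lt hφ0), ENNReal.ofReal_one]
  have hPAtoReal : (P A).toReal = 1 - φ := by
    rw [hPA, ENNReal.toReal_ofReal (by linarith)]
  -- integrands
  have hmul_eq : ∀ ω, X ω * A.indicator (fun _ => (1:ℝ)) ω = A.indicator X ω := by
    intro ω
    by_cases h : ω ∈ A <;> simp [h]
  have hmax_eq : ∀ ω, max (X ω - v) 0 = A.indicator (fun ω' => X ω' - v) ω := by
    intro ω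
    by_cases h : ω ∈ A
    · have hx : v ≤ X ω := h
      rw [Set.indicator_of_mem h]
      exact max_eq_left (sub_nonneg.2 hx)
    · have hx : X ω < v := lt_of_not_ge h
      rw [Set.indicator_of_notMem h]
      exact max_eq_right (sub_nonpos.2 hx.le)
  have hint_ind : Integrable (A.indicator X) P := hint.indicator hAmeas
  have hint_ind' : Integrable (A.indicator (fun ω => X ω - v)) P :=
    (hint.sub (integrable_const v)).indicator hAmeas
  have hI2 : ∫ ω, max (X ω - v) 0 ∂P
      = (∫ ω, A.indicator X ω ∂P) - v * (1 - φ) := by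
    rw [integral_congr_ae (Eventually.of_forall hmax_eq)]
    have : (A.indicator (fun ω => X ω - v)) = fun ω => A.indicator X ω - A.indicator (fun _ => v) ω := by
      ext ω; by_cases h : ω ∈ A <;> simp [h]
    rw [this, integral_sub (hint.indicator hAmeas) ((integrable_const v).indicator hAmeas)]
    rw [integral_indicator_const _ hAmeas, measureReal_def, hPAtoReal]
    simp [smul_eq_mul]
    ring
  rw [integral_congr_ae (Eventually.of_forall hmul_eq), hI2]
  have h1φ : (1 : ℝ) - φ ≠ 0 := by linarith
  field_simp
  ring
end

section
/- The function v ↦ v + (1−φ)⁻¹ E[(X − v)⁺] is convex on ℝ and is minimized at v = VaR_φ[X], with minimum value equal to CVaR_φ[X], for any integrable real random variable X with continuous CDF and φ ∈ (0,1). -/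
open MeasureTheory

/-- the function `g v = v + (1−φ)⁻¹ E[(X − v)⁺]` is convex on ℝ and is
minimized at `v = VaR_φ[X]`, with minimum value `CVaR_φ[X]`, for any integrable real
random variable X with continuous CDF and φ ∈ (0,1). -/
theorem cvar_variational
    {Ω : Type*} [MeasurableSpace Ω] (P : Measure Ω) [IsProbabilityMeasure P]
    (X : Ω → ℝ) (hX : Measurable X) (hint : Integrable X P)
    (F : ℝ → ℝ) (hF : ∀ x, F x = (P {ω | X ω ≤ x}).toReal)
    (hcont : Continuous F)
    (φ : ℝ) (hφ : φ ∈ Set.Ioo (0 : ℝ) 1)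
    (g : ℝ → ℝ) (hg : ∀ v, g v = v + (1 - φ)⁻¹ * ∫ ω, max (X ω - v) 0 ∂P) :
    ConvexOn ℝ Set.univ g ∧
    (∀ w : ℝ, g (sInf {x : ℝ | φ ≤ F x}) ≤ g w) ∧
    g (sInf {x : ℝ | φ ≤ F x})
      = sInf {x : ℝ | φ ≤ F x}
        + (1 - φ)⁻¹ * ∫ ω, max (X ω - sInf {x : ℝ | φ ≤ F x}) 0 ∂P := by
  obtain ⟨hφ0, hφ1⟩ := hφ
  have hc : (0:ℝ) < 1 - φ := by linarith
  -- integrability of the positive parts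
  have hI : ∀ v : ℝ, Integrable (fun ω => max (X ω - v) 0) P := fun v =>
    (hint.sub (integrable_const v)).pos_part
  -- F in terms of cdf of the pushforward
  have hmap : IsProbabilityMeasure (P.map X) := Measure.isProbabilityMeasure_map hX.aemeasurable
  have hFc : ∀ x, F x = ProbabilityTheory.cdf (P.map X) x := by
    intro x
    rw [hF, ProbabilityTheory.cdf_eq_real, measureReal_def]
    congr 1
    rw [Measure.map_apply hX measurableSet_Iic]
    rfl
  have htop : Filter.Tendsto F Filter.atTop (nhds 1) := by
    have := ProbabilityTheory.tendsto_cdf_atTop (P.map X)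
    exact this.congr (fun x => (hFc x).symm)
  have hbot : Filter.Tendsto F Filter.atBot (nhds 0) := by
    have := ProbabilityTheory.tendsto_cdf_atBot (P.map X)
    exact this.congr (fun x => (hFc x).symm)
  set S : Set ℝ := {x : ℝ | φ ≤ F x} with hS
  set q : ℝ := sInf S with hq
  have hmono : Monotone F := by
    intro a b hab
    rw [hF, hF]
    exact ENNReal.toReal_mono (measure_ne_top P _)
      (measure_mono (fun ω h => le_trans h hab))
  -- S nonempty
  have hSne : S.Nonempty := by
    obtain ⟨x, hx⟩ := (htop.eventually (eventually_gt_nhds hφ1)).exists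
    exact ⟨x, le_of_lt hx⟩
  -- S bounded below
  have hSbdd : BddBelow S := by
    obtain ⟨x0, hx0⟩ := (hbot.eventually (eventually_lt_nhds hφ0)).exists
    refine ⟨x0, fun x hx => ?_⟩
    by_contra hlt
    push_neg at hlt
    exact absurd (le_trans hx (hmono hlt.le)) (not_le.mpr hx0)
  -- S is closed
  have hScl : IsClosed S := by
    have : S = F ⁻¹' Set.Ici φ := rfl
    rw [this]; exact IsClosed.preimage hcont isClosed_Ici
  have hqS : q ∈ S := hScl.csInf_mem hSne hSbdd
  -- F q = φ
  have hFq : F q = φ := by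
    refine le_antisymm ?_ hqS
    by_contra hlt
    push_neg at hlt
    obtain ⟨ε, hε, hball⟩ := Metric.eventually_nhds_iff.mp
      (hcont.continuousAt.eventually (eventually_gt_nhds hlt))
    have hmem : q - ε/2 ∈ S := le_of_lt (hball (by simp [abs_of_nonpos, hε.le]; rw [abs_of_pos] <;> linarith))
    have := csInf_le hSbdd hmem
    linarith
  -- P {X > q} toReal = 1 - φ
  have hPgt : (P {ω | q < X ω}).toReal = 1 - φ := by
    have hcompl : {ω | q < X ω} = {ω | X ω ≤ q}ᶜ := by
      ext ω; simp [not_le]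
    have hms : MeasurableSet {ω | X ω ≤ q} := hX measurableSet_Iic
    rw [hcompl, prob_compl_eq_one_sub hms,
      ENNReal.toReal_sub_of_le prob_le_one ENNReal.one_ne_top, ENNReal.toReal_one,
      ← hF, hFq]
  constructor
  · -- convexity
    have hid : ConvexOn ℝ (Set.univ : Set ℝ) (fun v : ℝ => v) :=
      (convexOn_id convex_univ)
    have hh : ConvexOn ℝ (Set.univ : Set ℝ)
        (fun v => (1 - φ)⁻¹ * ∫ ω, max (X ω - v) 0 ∂P) := by
      refine ⟨convex_univ, fun v _ w _ a b ha hb hab => ?_⟩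
      simp only [smul_eq_mul]
      have hre : a * ((1 - φ)⁻¹ * ∫ ω, max (X ω - v) 0 ∂P)
          + b * ((1 - φ)⁻¹ * ∫ ω, max (X ω - w) 0 ∂P)
          = (1 - φ)⁻¹ * (a * ∫ ω, max (X ω - v) 0 ∂P + b * ∫ ω, max (X ω - w) 0 ∂P) := by ring
      rw [hre]
      refine mul_le_mul_of_nonneg_left ?_ (by positivity)
      calc ∫ ω, max (X ω - (a * v + b * w)) 0 ∂P
          ≤ ∫ ω, (a * max (X ω - v) 0 + b * max (X ω - w) 0) ∂P := by
            refine integral_mono (hI _) (((hI v).const_mul a).add ((hI w).const_mul b)) ?_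
            intro ω
            have h1 : X ω - (a * v + b * w) = a * (X ω - v) + b * (X ω - w) := by
              have : a * X ω + b * X ω = X ω := by rw [← add_mul, hab, one_mul]
              ring_nf
              nlinarith [hab]
            show max (X ω - (a * v + b * w)) 0 ≤ a * max (X ω - v) 0 + b * max (X ω - w) 0
            rw [h1]
            calc max (a * (X ω - v) + b * (X ω - w)) 0
                ≤ max (a * (X ω - v)) 0 + max (b * (X ω - w)) 0 := by
                  rcases le_total (a * (X ω - v) + b * (X ω - w)) 0 with h | h
                  · simp [max_eq_right h]; positivity
                  · rw [max_eq_left h]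
                    exact add_le_add (le_max_left _ _) (le_max_left _ _)
              _ = a * max (X ω - v) 0 + b * max (X ω - w) 0 := by
                  rw [mul_max_of_nonneg _ _ ha, mul_max_of_nonneg _ _ hb, mul_zero, mul_zero]
        _ = a * ∫ ω, max (X ω - v) 0 ∂P + b * ∫ ω, max (X ω - w) 0 ∂P := by
            rw [integral_add ((hI v).const_mul a) ((hI w).const_mul b),
              integral_const_mul, integral_const_mul]
    have := hid.add hh
    refine ⟨convex_univ, fun v hv w hw a b ha hb hab => ?_⟩
    simp only [hg]
    exact this.2 hv hw ha hb hab
  refine ⟨?_, by rw [hg]⟩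
  -- minimality
  intro w
  rw [hg, hg]
  set s : Set Ω := {ω | q < X ω} with hs
  have hsm : MeasurableSet s := hX measurableSet_Ioi
  have hkey : ∫ ω, (max (X ω - q) 0 - s.indicator (fun _ => w - q) ω) ∂P
      ≤ ∫ ω, max (X ω - w) 0 ∂P := by
    refine integral_mono ((hI q).sub ?_) (hI w) ?_
    · exact (integrable_const (w - q)).indicator hsm
    · intro ω
      by_cases hωs : ω ∈ s
      · have hq' : q < X ω := hωs
        simp only [Set.indicator_of_mem hωs]
        rw [max_eq_left (by linarith)]
        calc X ω - q - (w - q) = X ω - w := by ring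
          _ ≤ max (X ω - w) 0 := le_max_left _ _
      · have hq' : ¬ q < X ω := hωs
        push_neg at hq'
        simp only [Set.indicator_of_notMem hωs, sub_zero]
        rw [max_eq_right (by linarith)]
        exact le_max_right _ _
  have hind : ∫ ω, s.indicator (fun _ => w - q) ω ∂P = (w - q) * (1 - φ) := by
    rw [integral_indicator_const _ hsm, smul_eq_mul, measureReal_def, hPgt, mul_comm]
  rw [integral_sub (hI q) ((integrable_const (w - q)).indicator hsm), hind] at hkey
  have hce : (1 - φ)⁻¹ * ((w - q) * (1 - φ)) = w - q := by
    field_simp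
  nlinarith [mul_le_mul_of_nonneg_left hkey (le_of_lt (inv_pos.mpr hc)),
    mul_sub ((1-φ)⁻¹) (∫ ω, max (X ω - q) 0 ∂P) ((w - q) * (1 - φ))]
end
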